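/- The function f(z₁,z₂,z₃,z₄) = e^{z₂+2z₃-z₄-2} - (-z₁/2 - z₂ + z₃ + z₄)² on ℂ⁴ satisfies the equation (∂f/∂z₁)² + f(z₁+14, z₂+1, z₃+3, z₄+5) = e^{z₂+2z₃-z₄} identically on ℂ⁴. -/

import Mathlib

noncomputable def f1 (z₁ z₂ z₃ z₄ : ℂ) : ℂ :=
  Complex.exp (z₂ + 2 * z₃ - z₄ - 2) - (-z₁ / 2 - z₂ + z₃ + z₄) ^ 2

theorem stmt_1 : ∀ z₁ z₂ z₃ z₄ : ℂ,
    (deriv (fun w => f1 w z₂ z₃ z₄) z₁) ^ 2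
      + f1 (z₁ + 14) (z₂ + 1) (z₃ + 3) (z₄ + 5)
      = Complex.exp (z₂ + 2 * z₃ - z₄) := by
  intro z₁ z₂ z₃ z₄
  have hd : HasDerivAt (fun w => f1 w z₂ z₃ z₄) (-z₁ / 2 - z₂ + z₃ + z₄) z₁ := by
    have h1 : HasDerivAt (fun w : ℂ => -w / 2 - z₂ + z₃ + z₄) (-1 / 2) z₁ := by
      simpa using ((((hasDerivAt_id z₁).neg.div_const 2).sub_const z₂).add_const z₃).add_const z₄
    have h2 := (h1.pow 2).const_sub (Complex.exp (z₂ + 2 * z₃ - z₄ - 2))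
    convert h2 using 1
    · rfl
    · rfl
    · rfl
    · push_cast
      ring
  rw [hd.deriv]
  simp only [f1]
  have he : z₂ + 1 + 2 * (z₃ + 3) - (z₄ + 5) - 2 = z₂ + 2 * z₃ - z₄ := by ring
  rw [he]
  ring
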